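/- Let N₁ be a finitely generated free nilpotent group, N₂ a finitely generated nilpotent group, π : N₁ → N₂ a surjective homomorphism, and φ an automorphism of N₂. Then φ lifts to an automorphism φ̃ of N₁ (i.e. π ∘ φ̃ = φ ∘ π) if and only if the induced automorphism φ_* of N₂^{ab} lifts to an automorphism of N₁^{ab} along the induced surjection N₁^{ab} → N₂^{ab}. -/

import Mathlib

open Subgroup Pointwise
open scoped commutatorElement

universe u

section Aux

variable {G H : Type u} [Group G] [Group H]

theorem lcs_map_surj (f : G →* H) (hf : Function.Surjective f) (n : ℕ) :
    ((⊤ : Subgroup G).lowerCentralSeries n).map f = (⊤ : Subgroup H).lowerCentralSeries n := by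
  induction n with
  | zero =>
    simp only [Subgroup.lowerCentralSeries_zero]
    exact Subgroup.map_top_of_surjective f hf
  | succ n ih =>
    show Subgroup.map f ⁅(⊤ : Subgroup G).lowerCentralSeries n, ⊤⁆ = ⁅(⊤ : Subgroup H).lowerCentralSeries n, ⊤⁆
    rw [Subgroup.map_commutator, ih, Subgroup.map_top_of_surjective f hf]

theorem comm_of_lcs_succ_bot {n : ℕ} (h : (⊤ : Subgroup G).lowerCentralSeries (n + 1) = ⊥)
    {z : G} (hz : z ∈ (⊤ : Subgroup G).lowerCentralSeries n) (a : G) : z * a = a * z := by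
  have h1 : ⁅z, a⁆ ∈ (⊤ : Subgroup G).lowerCentralSeries (n + 1) :=
    commutator_mem_commutator hz (mem_top a)
  rw [h, Subgroup.mem_bot] at h1
  exact commutatorElement_eq_one_iff_mul_comm.mp h1

theorem conj_eq_of_comm {c : G} (hc : ∀ a : G, c * a = a * c) (x : G) : x * c * x⁻¹ = c := by
  rw [show x * c = c * x from (hc x).symm, mul_assoc, mul_inv_cancel, mul_one]

theorem comm_mul_left (x y a : G) : ⁅x * y, a⁆ = x * ⁅y, a⁆ * x⁻¹ * ⁅x, a⁆ := by
  simp only [commutatorElement_def]; group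

theorem comm_mul_right (x a b : G) : ⁅x, a * b⁆ = ⁅x, a⁆ * (a * ⁅x, b⁆ * a⁻¹) := by
  simp only [commutatorElement_def]; group

theorem comm_inv_left (x a : G) : ⁅x⁻¹, a⁆ = x⁻¹ * ⁅x, a⁆⁻¹ * (x⁻¹)⁻¹ := by
  simp only [commutatorElement_def]; group

theorem comm_inv_right (x a : G) : ⁅x, a⁻¹⁆ = a⁻¹ * ⁅x, a⁆⁻¹ * (a⁻¹)⁻¹ := by
  simp only [commutatorElement_def]; group

theorem comm_central_pair {x z y w : G} (hz : ∀ a : G, z * a = a * z)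
    (hw : ∀ a : G, w * a = a * w) : ⁅x * z, y * w⁆ = ⁅x, y⁆ := by
  rw [comm_mul_left, commutatorElement_eq_one_iff_mul_comm.mpr (hz (y * w)), mul_one,
    mul_inv_cancel, one_mul, comm_mul_right,
    commutatorElement_eq_one_iff_mul_comm.mpr ((hw x).symm), mul_one, mul_inv_cancel, mul_one]

theorem eq_top_of_sup_commutator : ∀ (n : ℕ) {G : Type u} [Group G],
    (⊤ : Subgroup G).lowerCentralSeries n = ⊥ → ∀ H : Subgroup G, H ⊔ (⊤ : Subgroup G).lowerCentralSeries 1 = ⊤ → H = ⊤ := by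
  intro n
  induction n with
  | zero =>
    intro G _ hbot H _
    rw [eq_top_iff]
    intro g _
    have hg : g ∈ (⊤ : Subgroup G).lowerCentralSeries 0 := by rw [Subgroup.lowerCentralSeries_zero]; exact mem_top g
    rw [hbot, Subgroup.mem_bot] at hg
    rw [hg]; exact H.one_mem
  | succ n ih =>
    intro G _ hbot H hH
    set K := (⊤ : Subgroup G).lowerCentralSeries n with hK
    let q : G →* G ⧸ K := QuotientGroup.mk' K
    have hqs : Function.Surjective q := QuotientGroup.mk'_surjective K
    have hbotQ : (⊤ : Subgroup (G ⧸ K)).lowerCentralSeries n = ⊥ := by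
      rw [← lcs_map_surj q hqs n, Subgroup.map_eq_bot_iff, QuotientGroup.ker_mk']
    have h1 : H.map q ⊔ (⊤ : Subgroup (G ⧸ K)).lowerCentralSeries 1 = ⊤ := by
      rw [← lcs_map_surj q hqs 1, ← Subgroup.map_sup, hH, Subgroup.map_top_of_surjective q hqs]
    have h2 := ih hbotQ (H.map q) h1
    have h3 : H ⊔ K = ⊤ := by
      have h := congrArg (comap q) h2
      rwa [Subgroup.comap_map_eq, QuotientGroup.ker_mk', Subgroup.comap_top] at h
    have hcen : ∀ z ∈ K, ∀ a : G, z * a = a * z := fun z hz a =>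
      comm_of_lcs_succ_bot hbot hz a
    have h4 : (⊤ : Subgroup G).lowerCentralSeries 1 ≤ H := by
      rw [Subgroup.top_lowerCentralSeries_one, commutator_def, commutator_le]
      intro g _ h _
      have hg : g ∈ (H : Set G) * (K : Set G) := by
        rw [← Subgroup.mul_normal H K, h3]; trivial
      have hh : h ∈ (H : Set G) * (K : Set G) := by
        rw [← Subgroup.mul_normal H K, h3]; trivial
      obtain ⟨a, ha, z, hz, rfl⟩ := hg
      obtain ⟨b, hb, w, hw, rfl⟩ := hh
      rw [comm_central_pair (hcen z hz) (hcen w hw), commutatorElement_def]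
      exact H.mul_mem (H.mul_mem (H.mul_mem ha hb) (H.inv_mem ha)) (H.inv_mem hb)
    exact (sup_eq_left.mpr h4) ▸ hH

theorem lcs_le_closure_commutators {Q : Type u} [Group Q] (n : ℕ)
    (hbot : (⊤ : Subgroup Q).lowerCentralSeries (n + 2) = ⊥) (X Y : Set Q)
    (hX : X ⊆ ↑((⊤ : Subgroup Q).lowerCentralSeries n))
    (hXg : (⊤ : Subgroup Q).lowerCentralSeries n ≤ closure X ⊔ (⊤ : Subgroup Q).lowerCentralSeries (n + 1))
    (hY : closure Y = ⊤) :
    (⊤ : Subgroup Q).lowerCentralSeries (n + 1) ≤ closure ((fun p : Q × Q => ⁅p.1, p.2⁆) '' X ×ˢ Y) := by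
  set C : Subgroup Q := closure ((fun p : Q × Q => ⁅p.1, p.2⁆) '' X ×ˢ Y) with hCdef
  have hCle : C ≤ (⊤ : Subgroup Q).lowerCentralSeries (n + 1) := by
    rw [hCdef, closure_le]
    rintro w ⟨⟨a, b⟩, ⟨ha, hb⟩, rfl⟩
    exact commutator_mem_commutator (hX ha) (mem_top b)
  have hcen : ∀ z ∈ (⊤ : Subgroup Q).lowerCentralSeries (n + 1), ∀ a : Q, z * a = a * z := fun z hz a =>
    comm_of_lcs_succ_bot hbot hz a
  have hCc : ∀ c ∈ C, ∀ a : Q, c * a = a * c := fun c hc a => hcen c (hCle hc) a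
  have hγ2 : ∀ z ∈ (⊤ : Subgroup Q).lowerCentralSeries (n + 1), ∀ a : Q, ⁅z, a⁆ = 1 := by
    intro z hz a
    have h : ⁅z, a⁆ ∈ (⊤ : Subgroup Q).lowerCentralSeries (n + 2) := commutator_mem_commutator hz (mem_top a)
    rwa [hbot, mem_bot] at h
  have stepA : ∀ x ∈ X, ∀ a : Q, ⁅x, a⁆ ∈ C := by
    intro x hx
    let E : Subgroup Q :=
      { carrier := {a : Q | ⁅x, a⁆ ∈ C}
        one_mem' := by
          show ⁅x, (1 : Q)⁆ ∈ C
          rw [commutatorElement_one_right]; exact C.one_mem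
        mul_mem' := by
          intro a b ha hb
          show ⁅x, a * b⁆ ∈ C
          rw [comm_mul_right, conj_eq_of_comm (hCc _ hb)]
          exact C.mul_mem ha hb
        inv_mem' := by
          intro a ha
          show ⁅x, a⁻¹⁆ ∈ C
          rw [comm_inv_right, conj_eq_of_comm (hCc _ (C.inv_mem ha))]
          exact C.inv_mem ha }
    intro a
    have hE : (⊤ : Subgroup Q) ≤ E := by
      rw [← hY, closure_le]
      intro y hy
      exact subset_closure ⟨(x, y), ⟨hx, hy⟩, rfl⟩
    exact hE (mem_top a)
  let D : Subgroup Q :=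
    { carrier := {g : Q | ∀ a : Q, ⁅g, a⁆ ∈ C}
      one_mem' := fun a => by rw [commutatorElement_one_left]; exact C.one_mem
      mul_mem' := by
        intro g h hg hh a
        rw [comm_mul_left, conj_eq_of_comm (hCc _ (hh a))]
        exact C.mul_mem (hh a) (hg a)
      inv_mem' := by
        intro g hg a
        rw [comm_inv_left, conj_eq_of_comm (hCc _ (C.inv_mem (hg a)))]
        exact C.inv_mem (hg a) }
  have hD : (⊤ : Subgroup Q).lowerCentralSeries n ≤ D := by
    refine le_trans hXg (sup_le ?_ ?_)
    · exact closure_le D |>.mpr fun g hg a => stepA g hg a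
    · intro z hz
      intro a
      rw [hγ2 z hz a]
      exact C.one_mem
  show ⁅(⊤ : Subgroup Q).lowerCentralSeries n, (⊤ : Subgroup Q)⁆ ≤ C
  rw [commutator_le]
  intro g hg a _
  exact hD hg a

theorem exists_finite_layer_gen {G : Type u} [Group G] (X : Set G) (hXf : X.Finite)
    (hXgen : closure X = ⊤) (n : ℕ) :
    ∃ S : Set G, S.Finite ∧ S ⊆ ↑((⊤ : Subgroup G).lowerCentralSeries n) ∧
      (⊤ : Subgroup G).lowerCentralSeries n ≤ closure S ⊔ (⊤ : Subgroup G).lowerCentralSeries (n + 1) := by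
  induction n with
  | zero =>
    exact ⟨X, hXf, by rw [Subgroup.lowerCentralSeries_zero]; exact fun a _ => mem_top a,
      by rw [hXgen]; exact le_sup_left⟩
  | succ n ih =>
    obtain ⟨S, hSf, hSsub, hSgen⟩ := ih
    refine ⟨(fun p : G × G => ⁅p.1, p.2⁆) '' S ×ˢ X, (hSf.prod hXf).image _, ?_, ?_⟩
    · rintro w ⟨⟨a, b⟩, ⟨ha, hb⟩, rfl⟩
      exact commutator_mem_commutator (hSsub ha) (mem_top b)
    · set K := (⊤ : Subgroup G).lowerCentralSeries (n + 2) with hKdef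
      let q : G →* G ⧸ K := QuotientGroup.mk' K
      have hqs : Function.Surjective q := QuotientGroup.mk'_surjective K
      have hbotQ : (⊤ : Subgroup (G ⧸ K)).lowerCentralSeries (n + 2) = ⊥ := by
        rw [← lcs_map_surj q hqs, Subgroup.map_eq_bot_iff, QuotientGroup.ker_mk']
      have key := lcs_le_closure_commutators n hbotQ (q '' S) (q '' X) ?_ ?_ ?_
      · -- transfer back
        intro g hg
        have h1 : q g ∈ (⊤ : Subgroup (G ⧸ K)).lowerCentralSeries (n + 1) := by
          rw [← lcs_map_surj q hqs]
          exact mem_map_of_mem q hg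
        have h2 : q g ∈ Subgroup.map q (closure ((fun p : G × G => ⁅p.1, p.2⁆) '' S ×ˢ X)) := by
          refine (?_ : Subgroup.closure _ ≤ _) (key h1)
          rw [closure_le]
          rintro w ⟨⟨a, b⟩, ⟨⟨s, hs, rfl⟩, ⟨t, ht, rfl⟩⟩, rfl⟩
          exact ⟨⁅s, t⁆, subset_closure ⟨(s, t), ⟨hs, ht⟩, rfl⟩, (map_commutatorElement q s t).symm⟩
        have h3 : g ∈ closure ((fun p : G × G => ⁅p.1, p.2⁆) '' S ×ˢ X) ⊔ q.ker := by
          rw [← Subgroup.comap_map_eq]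
          exact mem_comap.mpr h2
        rwa [QuotientGroup.ker_mk'] at h3
      · rintro w ⟨s, hs, rfl⟩
        rw [← lcs_map_surj q hqs n]
        exact mem_map_of_mem q (hSsub hs)
      · rw [← lcs_map_surj q hqs n, ← lcs_map_surj q hqs (n + 1), ← MonoidHom.map_closure,
          ← Subgroup.map_sup]
        exact Subgroup.map_mono hSgen
      · rw [← MonoidHom.map_closure, hXgen, Subgroup.map_top_of_surjective q hqs]

theorem surj_endo_inj_of_fg_comm {A : Type u} [CommGroup A] (h : Group.FG A)
    (f : A →* A) (hf : Function.Surjective f) : Function.Injective f := by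
  haveI : AddGroup.FG (Additive A) := GroupFG.iff_add_fg.mp h
  haveI : Module.Finite ℤ (Additive A) := Module.Finite.iff_addGroup_fg.mpr ‹_›
  let g := (MonoidHom.toAdditive f).toIntLinearMap
  have hg : Function.Surjective g := hf
  exact IsNoetherian.injective_of_surjective_endomorphism g hg

theorem injective_of_surjective_endo {G : Type u} [Group G] {X : Set G} (hXf : X.Finite)
    (hXgen : closure X = ⊤) {c : ℕ} (hGbot : (⊤ : Subgroup G).lowerCentralSeries c = ⊥)
    (θ : G →* G) (hθ : Function.Surjective θ) : Function.Injective θ := by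
  rw [injective_iff_map_eq_one]
  intro x hx
  have hmem : ∀ i, x ∈ (⊤ : Subgroup G).lowerCentralSeries i := by
    intro i
    induction i with
    | zero => rw [Subgroup.lowerCentralSeries_zero]; exact mem_top x
    | succ i ihx =>
      set K := (⊤ : Subgroup G).lowerCentralSeries (i + 1) with hKdef
      let q : G →* G ⧸ K := QuotientGroup.mk' K
      have hqs : Function.Surjective q := QuotientGroup.mk'_surjective K
      have hθK : K ≤ K.comap θ := by
        intro g hg
        exact mem_comap.mpr (Subgroup.lowerCentralSeries.map θ (i + 1) (mem_map_of_mem θ hg))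
      let θQ : G ⧸ K →* G ⧸ K := QuotientGroup.map K K θ hθK
      have hcomm : ∀ g : G, θQ (q g) = q (θ g) := fun g => QuotientGroup.map_mk' K K θ hθK g
      have hθQs : Function.Surjective θQ := by
        intro y
        obtain ⟨g, hg⟩ := hqs y
        obtain ⟨g', hg'⟩ := hθ g
        exact ⟨q g', by rw [hcomm, hg', hg]⟩
      have hbotQ : (⊤ : Subgroup (G ⧸ K)).lowerCentralSeries (i + 1) = ⊥ := by
        rw [← lcs_map_surj q hqs, Subgroup.map_eq_bot_iff, QuotientGroup.ker_mk']
      set A := (⊤ : Subgroup (G ⧸ K)).lowerCentralSeries i with hAdef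
      letI : CommGroup ↥A :=
        { (inferInstance : Group ↥A) with
          mul_comm := fun a b => Subtype.ext (comm_of_lcs_succ_bot hbotQ a.2 b.1) }
      have hfgA : Group.FG ↥A := by
        obtain ⟨S, hSf, hSsub, hSle⟩ := exists_finite_layer_gen (q '' X) (hXf.image q)
          (by rw [← MonoidHom.map_closure, hXgen, Subgroup.map_top_of_surjective q hqs]) i
        have hAeq : A = closure S := by
          refine le_antisymm ?_ ((closure_le _).mpr hSsub)
          rw [hbotQ, sup_bot_eq] at hSle
          exact hSle
        rw [Group.fg_iff_subgroup_fg]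
        exact ⟨hSf.toFinset, by rw [Set.Finite.coe_toFinset, ← hAeq]⟩
      have hmapA : A.map θQ = A := lcs_map_surj θQ hθQs i
      have hmemA : ∀ a : ↥A, θQ a.1 ∈ A := by
        intro a
        have := mem_map_of_mem θQ a.2
        rwa [hmapA] at this
      let θ' : ↥A →* ↥A := (θQ.comp A.subtype).codRestrict A hmemA
      have hθ's : Function.Surjective θ' := by
        intro b
        have hb : b.1 ∈ A.map θQ := by rw [hmapA]; exact b.2
        obtain ⟨a, ha, hab⟩ := hb
        exact ⟨⟨a, ha⟩, Subtype.ext hab⟩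
      have hθ'i := surj_endo_inj_of_fg_comm hfgA θ' hθ's
      have hqx : q x ∈ A := by
        rw [hAdef, ← lcs_map_surj q hqs]
        exact mem_map_of_mem q ihx
      have h1 : θ' ⟨q x, hqx⟩ = 1 := by
        refine Subtype.ext ?_
        show θQ (q x) = 1
        rw [hcomm, hx, map_one]
      have h2 : (⟨q x, hqx⟩ : ↥A) = 1 := hθ'i (by rw [h1, map_one])
      have h3 : q x = 1 := congrArg Subtype.val h2
      have h4 : x ∈ q.ker := h3
      rwa [QuotientGroup.ker_mk'] at h4
  have := hmem c
  rwa [hGbot, mem_bot] at this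

theorem abstract_lift {N : Type} [Group N] {ι : Type} (x : ι → N)
    (hfin : (Set.range x).Finite) (hgen : closure (Set.range x) = ⊤) {c : ℕ}
    (hbot : (⊤ : Subgroup N).lowerCentralSeries c = ⊥)
    (hfree : ∀ g : ι → N, ∃ f : N →* N, ∀ i, f (x i) = g i)
    {N₂ : Type} [Group N₂] (π : N →* N₂) (hπ : Function.Surjective π) (φ : N₂ ≃* N₂) :
    (∃ φt : N ≃* N, π.comp φt.toMonoidHom = φ.toMonoidHom.comp π) ↔
    (∃ ψ : Abelianization N ≃* Abelianization N,
        (Abelianization.map π).comp ψ.toMonoidHom =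
          (Abelianization.map φ.toMonoidHom).comp (Abelianization.map π)) := by
  constructor
  · rintro ⟨φt, hφt⟩
    have hinv : ∀ e : N ≃* N,
        (Abelianization.map e.symm.toMonoidHom).comp (Abelianization.map e.toMonoidHom) =
          MonoidHom.id (Abelianization N) := by
      intro e
      rw [Abelianization.map_comp]
      have he : e.symm.toMonoidHom.comp e.toMonoidHom = MonoidHom.id N := by
        ext a; simp
      rw [he, Abelianization.map_id]
    refine ⟨{ toFun := Abelianization.map φt.toMonoidHom
              invFun := Abelianization.map φt.symm.toMonoidHom
              left_inv := fun a => by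
                have := DFunLike.congr_fun (hinv φt) a
                simpa using this
              right_inv := fun a => by
                have := DFunLike.congr_fun (hinv φt.symm) a
                simpa using this
              map_mul' := map_mul _ }, ?_⟩
    have htm : ∀ a, (Abelianization.map φt.toMonoidHom) a = (Abelianization.map φt.toMonoidHom) a := fun _ => rfl
    refine MonoidHom.ext fun a => ?_
    show (Abelianization.map π) ((Abelianization.map φt.toMonoidHom) a) =
      (Abelianization.map φ.toMonoidHom) ((Abelianization.map π) a)
    rw [Abelianization.map_map_apply, hφt, ← Abelianization.map_map_apply]
  · rintro ⟨ψ, hψ⟩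
    have hext : ∀ {M : Type} [Group M] (f g : N →* M), (∀ i, f (x i) = g (x i)) → f = g := by
      intro M _ f g h
      refine MonoidHom.eq_of_eqOn_dense hgen ?_
      rintro _ ⟨i, rfl⟩
      exact h i
    have hofsurj : Function.Surjective (Abelianization.of : N → Abelianization N) := fun a =>
      QuotientGroup.induction_on a fun g => ⟨g, rfl⟩
    have hchoice : ∀ i, ∃ g : N, π g = φ (π (x i)) ∧
        Abelianization.of g = ψ (Abelianization.of (x i)) := by
      intro i
      obtain ⟨h, hh⟩ := hofsurj (ψ (Abelianization.of (x i)))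
      have e1 : (Abelianization.map π) (ψ (Abelianization.of (x i))) =
          (Abelianization.map φ.toMonoidHom) ((Abelianization.map π) (Abelianization.of (x i))) :=
        DFunLike.congr_fun hψ (Abelianization.of (x i))
      rw [← hh, Abelianization.map_of, Abelianization.map_of, Abelianization.map_of] at e1
      simp only [MulEquiv.coe_toMonoidHom] at e1
      have h2 : (π h)⁻¹ * φ (π (x i)) ∈ commutator N₂ := by
        have e2 : Abelianization.of ((π h)⁻¹ * φ (π (x i))) = 1 := by
          rw [map_mul, map_inv, e1, inv_mul_cancel]
        exact (QuotientGroup.eq_one_iff _).mp e2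
      have h3 : commutator N₂ = (commutator N).map π := by
        have := lcs_map_surj π hπ 1
        rw [Subgroup.top_lowerCentralSeries_one, Subgroup.top_lowerCentralSeries_one] at this
        exact this.symm
      rw [h3] at h2
      obtain ⟨z, hz, hzeq⟩ := h2
      refine ⟨h * z, ?_, ?_⟩
      · rw [map_mul, hzeq, ← mul_assoc, mul_inv_cancel, one_mul]
      · have hz1 : Abelianization.of z = 1 := (QuotientGroup.eq_one_iff z).mpr hz
        rw [map_mul, hh, hz1, mul_one]
    choose g hg1 hg2 using hchoice
    obtain ⟨θ, hθ⟩ := hfree g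
    have hπθ : π.comp θ = φ.toMonoidHom.comp π := by
      refine hext _ _ fun i => ?_
      show π (θ (x i)) = φ (π (x i))
      rw [hθ i, hg1 i]
    have habθ : Abelianization.map θ = ψ.toMonoidHom := by
      refine Abelianization.hom_ext _ _ (hext _ _ fun i => ?_)
      show Abelianization.map θ (Abelianization.of (x i)) = ψ (Abelianization.of (x i))
      rw [Abelianization.map_of, hθ i, hg2 i]
    have hrangesup : θ.range ⊔ (⊤ : Subgroup N).lowerCentralSeries 1 = ⊤ := by
      rw [eq_top_iff]
      intro n _
      obtain ⟨a, ha⟩ := ψ.surjective (Abelianization.of n)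
      obtain ⟨m, rfl⟩ := hofsurj a
      have e3 : Abelianization.of (θ m) = Abelianization.of n := by
        rw [← Abelianization.map_of, habθ]
        exact ha
      have hker : (θ m)⁻¹ * n ∈ commutator N := by
        refine (QuotientGroup.eq_one_iff _).mp ?_
        show Abelianization.of ((θ m)⁻¹ * n) = 1
        rw [map_mul, map_inv, e3, inv_mul_cancel]
      have e4 : n = θ m * ((θ m)⁻¹ * n) := by group
      rw [e4]
      exact mul_mem (mem_sup_left ⟨m, rfl⟩)
        (mem_sup_right (by rw [Subgroup.top_lowerCentralSeries_one]; exact hker))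
    have hθs : Function.Surjective θ := by
      have h := eq_top_of_sup_commutator c hbot θ.range hrangesup
      exact MonoidHom.range_eq_top.mp h
    have hθi : Function.Injective θ := injective_of_surjective_endo hfin hgen hbot θ hθs
    refine ⟨MulEquiv.ofBijective θ ⟨hθi, hθs⟩, ?_⟩
    refine MonoidHom.ext fun a => ?_
    show π ((MulEquiv.ofBijective θ ⟨hθi, hθs⟩) a) = φ (π a)
    exact DFunLike.congr_fun hπθ a

end Aux



/-- The free nilpotent group of class `c` on `k` generators: the quotient of the free group on
`k` generators by the `(c+1)`-st term of its lower central series (with Mathlib's indexing,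
`(⊤ : Subgroup G).lowerCentralSeries 0 = G`, so the `(c+1)`-st term is `(⊤ : Subgroup G).lowerCentralSeries c`). -/
def FreeNilpotentGroup (k c : ℕ) : Type :=
  FreeGroup (Fin k) ⧸ (⊤ : Subgroup (FreeGroup (Fin k))).lowerCentralSeries c

noncomputable instance (k c : ℕ) : Group (FreeNilpotentGroup k c) :=
  QuotientGroup.Quotient.group _

/-- Let `N₁` be a finitely generated free nilpotent group, `N₂` a finitely
generated nilpotent group, `π : N₁ → N₂` a surjective homomorphism, and `φ` an automorphism of
`N₂`.  Then `φ` lifts to an automorphism `φ̃` of `N₁` (i.e. `π ∘ φ̃ = φ ∘ π`) if and only if the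
induced automorphism `φ_*` of the abelianization `N₂^{ab}` lifts to an automorphism of
`N₁^{ab}` along the induced surjection `N₁^{ab} → N₂^{ab}`. -/
theorem stmt_19 (k c : ℕ) (N₂ : Type) [Group N₂] [Group.FG N₂] [Group.IsNilpotent N₂]
    (π : FreeNilpotentGroup k c →* N₂) (hπ : Function.Surjective π) (φ : N₂ ≃* N₂) :
    (∃ φt : FreeNilpotentGroup k c ≃* FreeNilpotentGroup k c,
        π.comp φt.toMonoidHom = φ.toMonoidHom.comp π) ↔
    (∃ ψ : Abelianization (FreeNilpotentGroup k c) ≃* Abelianization (FreeNilpotentGroup k c),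
        (Abelianization.map π).comp ψ.toMonoidHom =
          (Abelianization.map φ.toMonoidHom).comp (Abelianization.map π)) := by
  set Γ := (⊤ : Subgroup (FreeGroup (Fin k))).lowerCentralSeries c with hΓ
  let p : FreeGroup (Fin k) →* FreeNilpotentGroup k c := QuotientGroup.mk' Γ
  have hps : Function.Surjective p := QuotientGroup.mk'_surjective Γ
  let x : Fin k → FreeNilpotentGroup k c := fun i => p (FreeGroup.of i)
  have hrange : Set.range x = p '' Set.range FreeGroup.of := by
    rw [show x = p ∘ FreeGroup.of from rfl, Set.range_comp]
  have hfin : (Set.range x).Finite := Set.finite_range x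
  have hgen : closure (Set.range x) = ⊤ := by
    rw [hrange, ← MonoidHom.map_closure, FreeGroup.closure_range_of,
      Subgroup.map_top_of_surjective p hps]
  have hbot : (⊤ : Subgroup (FreeNilpotentGroup k c)).lowerCentralSeries c = ⊥ := by
    rw [← lcs_map_surj p hps c, Subgroup.map_eq_bot_iff]; exact (QuotientGroup.ker_mk' Γ).ge
  have hfree : ∀ g : Fin k → FreeNilpotentGroup k c,
      ∃ f : FreeNilpotentGroup k c →* FreeNilpotentGroup k c, ∀ i, f (x i) = g i := by
    intro g
    have hle : Γ ≤ (FreeGroup.lift g).ker := by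
      intro w hw
      have h1 : (FreeGroup.lift g) w ∈
          ((⊤ : Subgroup (FreeGroup (Fin k))).lowerCentralSeries c).map (FreeGroup.lift g) :=
        mem_map_of_mem _ hw
      have h2 := Subgroup.lowerCentralSeries.map (FreeGroup.lift g) c h1
      rw [hbot, mem_bot] at h2
      exact h2
    refine ⟨QuotientGroup.lift Γ (FreeGroup.lift g) hle, fun i => ?_⟩
    show QuotientGroup.lift Γ (FreeGroup.lift g) hle (p (FreeGroup.of i)) = g i
    rw [show p (FreeGroup.of i) = QuotientGroup.mk (FreeGroup.of i) from rfl,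
      QuotientGroup.lift_mk', FreeGroup.lift_apply_of]
  exact abstract_lift x hfin hgen hbot hfree π hπ φ
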